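/- Let W be any subset of the nine points {w(k,j) : k, j ∈ Fin 3} and let P = convexHull ℝ W. Then every two-dimensional face of P is a triangle: if F is a closed convex set with IsExtreme ℝ P F and the vector span of F has ℝ-dimension 2, then there exist affinely independent points a, b, c with F = convexHull ℝ {a, b, c}. -/

import Mathlib

open Finset

theorem key4 (t : Fin 3 → ℝ × ℝ)
    (ht : t = ![(1, 0), (-1/2, Real.sqrt 3 / 2), (-1/2, -(Real.sqrt 3 / 2))])
    (w : Fin 3 → Fin 3 → EuclideanSpace ℝ (Fin 6))
    (hw : ∀ k j i, w k j i =
      if (i : ℕ) = 2 * (k : ℕ) then (t j).1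
      else if (i : ℕ) = 2 * (k : ℕ) + 1 then (t j).2 else 0)
    (p : Fin 4 → EuclideanSpace ℝ (Fin 6))
    (hpV : ∀ i, ∃ k j, p i = w k j) (hpinj : Function.Injective p) :
    AffineIndependent ℝ p := by
  have hs3 : (0:ℝ) < Real.sqrt 3 := by positivity
  have hker : ∀ a b c : ℝ, a • t 0 + b • t 1 + c • t 2 = 0 → a = b ∧ b = c := by
    intro a b c h
    rw [ht] at h
    simp [Prod.ext_iff, Prod.smul_def, smul_eq_mul, Matrix.cons_val_zero, Matrix.cons_val_one] at h
    obtain ⟨h1, h2⟩ := h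
    have hbc : b = c := by
      have h' : (b - c) * (Real.sqrt 3 / 2) = 0 := by ring_nf; ring_nf at h2; linarith
      rcases mul_eq_zero.1 h' with h | h
      · linarith
      · exfalso; nlinarith
    exact ⟨by linarith, hbc⟩
  choose k j hkj using hpV
  have hpairinj : ∀ i i' : Fin 4, k i = k i' → j i = j i' → i = i' := by
    intro i i' hk hj
    apply hpinj
    rw [hkj, hkj, hk, hj]
  rw [affineIndependent_iff_of_fintype]
  intro c hc0 hcsum
  rw [Finset.univ.weightedVSub_eq_linear_combination hc0] at hcsum
  have key : ∀ i6 : Fin 6, ∑ i : Fin 4, c i * p i i6 = 0 := by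
    intro i6
    have := congrArg (fun v : EuclideanSpace ℝ (Fin 6) => v i6) hcsum
    simpa [WithLp.ofLp_sum, Finset.sum_apply, PiLp.smul_apply, smul_eq_mul] using this
  set d : Fin 3 → Fin 3 → ℝ :=
    fun m jj => ∑ i ∈ univ.filter (fun i => k i = m ∧ j i = jj), c i with hd_def
  have regroup : ∀ (m : Fin 3) (g : ℝ × ℝ → ℝ),
      ∑ i : Fin 4, (if k i = m then c i * g (t (j i)) else 0) =
        ∑ jj : Fin 3, d m jj * g (t jj) := by
    intro m g
    rw [← Finset.sum_filter]
    rw [← Finset.sum_fiberwise (univ.filter (fun i => k i = m)) (fun i => j i)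
        (fun i => c i * g (t (j i)))]
    refine Finset.sum_congr rfl fun jj _ => ?_
    rw [Finset.filter_filter, Finset.sum_mul]
    refine Finset.sum_congr rfl fun i hi => ?_
    simp only [Finset.mem_filter] at hi
    rw [hi.2.2]
  have coord : ∀ (m : Fin 3) (i6 : Fin 6) (g : ℝ × ℝ → ℝ),
      ((i6 : ℕ) = 2 * (m : ℕ) ∧ g = Prod.fst ∨ (i6 : ℕ) = 2 * (m : ℕ) + 1 ∧ g = Prod.snd) →
      ∀ i : Fin 4, c i * p i i6 = (if k i = m then c i * g (t (j i)) else 0) := by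
    rintro m i6 g (⟨hv, rfl⟩ | ⟨hv, rfl⟩) i <;>
    · rw [hkj i, hw, hv]
      by_cases hkm : k i = m
      · subst hkm
        simp
      · have h1 : ¬ (2 * (m : ℕ) = 2 * ((k i) : ℕ)) := fun h' => hkm (Fin.ext (by omega))
        have h2 : ¬ (2 * (m : ℕ) = 2 * ((k i) : ℕ) + 1) := by omega
        have h3 : ¬ (2 * (m : ℕ) + 1 = 2 * ((k i) : ℕ)) := by omega
        have h4 : ¬ (2 * (m : ℕ) + 1 = 2 * ((k i) : ℕ) + 1) := fun h' => hkm (Fin.ext (by omega))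
        simp only [h1, h2, h3, h4, if_false, if_neg hkm, mul_zero]
  have hplane : ∀ m : Fin 3,
      (∑ jj : Fin 3, d m jj * (t jj).1 = 0) ∧ (∑ jj : Fin 3, d m jj * (t jj).2 = 0) := by
    intro m
    constructor
    · rw [← regroup m Prod.fst,
        ← Finset.sum_congr rfl (fun i _ => coord m ⟨2 * (m : ℕ), by omega⟩ Prod.fst
          (Or.inl ⟨rfl, rfl⟩) i)]
      exact key _
    · rw [← regroup m Prod.snd,
        ← Finset.sum_congr rfl (fun i _ => coord m ⟨2 * (m : ℕ) + 1, by omega⟩ Prod.snd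
          (Or.inr ⟨rfl, rfl⟩) i)]
      exact key _
  have hvec : ∀ m : Fin 3, d m 0 • t 0 + d m 1 • t 1 + d m 2 • t 2 = 0 := by
    intro m
    obtain ⟨h1, h2⟩ := hplane m
    rw [Fin.sum_univ_three] at h1 h2
    ext
    · simpa [smul_eq_mul] using h1
    · simpa [smul_eq_mul] using h2
  have hall : ∀ (m : Fin 3) (j1 j2 : Fin 3), d m j1 = d m j2 := by
    intro m j1 j2
    obtain ⟨e1, e2⟩ := hker (d m 0) (d m 1) (d m 2) (hvec m)
    have h3 : ∀ x : Fin 3, x = 0 ∨ x = 1 ∨ x = 2 := by decide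
    rcases h3 j1 with rfl | rfl | rfl <;> rcases h3 j2 with rfl | rfl | rfl <;> linarith
  have hcd : ∀ i : Fin 4, c i = d (k i) (j i) := by
    intro i
    have hfs : univ.filter (fun b => k b = k i ∧ j b = j i) = {i} := by
      ext b
      simp only [Finset.mem_filter, Finset.mem_univ, true_and, Finset.mem_singleton]
      constructor
      · rintro ⟨h1, h2⟩; exact hpairinj b i h1 h2
      · rintro rfl; exact ⟨rfl, rfl⟩
    rw [hd_def]
    simp only [hfs, Finset.sum_singleton]
  intro i0
  by_cases hfull : ∀ jj : Fin 3, ∃ i, k i = k i0 ∧ j i = jj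
  · obtain ⟨a0, ha0k, ha0j⟩ := hfull 0
    obtain ⟨a1, ha1k, ha1j⟩ := hfull 1
    obtain ⟨a2, ha2k, ha2j⟩ := hfull 2
    have hne01 : a0 ≠ a1 := by rintro rfl; rw [ha0j] at ha1j; exact absurd ha1j (by decide)
    have hne02 : a0 ≠ a2 := by rintro rfl; rw [ha0j] at ha2j; exact absurd ha2j (by decide)
    have hne12 : a1 ≠ a2 := by rintro rfl; rw [ha1j] at ha2j; exact absurd ha2j (by decide)
    obtain ⟨b, hb0, hb1, hb2, hcover⟩ :=
      (by decide : ∀ x y z : Fin 4, x ≠ y → x ≠ z → y ≠ z →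
        ∃ v, v ≠ x ∧ v ≠ y ∧ v ≠ z ∧ ∀ u, u = x ∨ u = y ∨ u = z ∨ u = v) a0 a1 a2 hne01 hne02 hne12
    have h3 : ∀ x : Fin 3, x = 0 ∨ x = 1 ∨ x = 2 := by decide
    have hkb : k b ≠ k i0 := by
      intro hkbm
      rcases h3 (j b) with hj | hj | hj
      · exact hb0 (hpairinj b a0 (hkbm.trans ha0k.symm) (hj.trans ha0j.symm))
      · exact hb1 (hpairinj b a1 (hkbm.trans ha1k.symm) (hj.trans ha1j.symm))
      · exact hb2 (hpairinj b a2 (hkbm.trans ha2k.symm) (hj.trans ha2j.symm))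
    obtain ⟨jj', hjj'⟩ := (by decide : ∀ x : Fin 3, ∃ y, y ≠ x) (j b)
    have hempty : univ.filter (fun i => k i = k b ∧ j i = jj') = ∅ := by
      ext i
      simp only [Finset.mem_filter, Finset.mem_univ, true_and, Finset.notMem_empty, iff_false,
        not_and]
      intro h1 h2
      rcases hcover i with rfl | rfl | rfl | rfl
      · exact hkb (h1.symm.trans ha0k)
      · exact hkb (h1.symm.trans ha1k)
      · exact hkb (h1.symm.trans ha2k)
      · exact hjj' h2.symm
    have hcb : c b = 0 := by
      rw [hcd b, hall (k b) (j b) jj', hd_def]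
      simp [hempty]
    have hca0 : c a0 = d (k i0) 0 := by rw [hcd a0, ha0k, ha0j]
    have hca1 : c a1 = d (k i0) 0 := by rw [hcd a1, ha1k, ha1j, hall (k i0) 1 0]
    have hca2 : c a2 = d (k i0) 0 := by rw [hcd a2, ha2k, ha2j, hall (k i0) 2 0]
    have huniv : (univ : Finset (Fin 4)) = {a0, a1, a2, b} := by
      ext u
      simp only [Finset.mem_univ, true_iff, Finset.mem_insert, Finset.mem_singleton]
      exact hcover u
    have hsum : c a0 + c a1 + c a2 + c b = 0 := by
      rw [huniv] at hc0
      rw [Finset.sum_insert (by simp [hne01, hne02, (Ne.symm hb0)]), Finset.sum_insert (by simp [hne12, (Ne.symm hb1)]),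
        Finset.sum_insert (by simp [(Ne.symm hb2)]), Finset.sum_singleton] at hc0
      linarith
    have hlam : d (k i0) 0 = 0 := by
      rw [hca0, hca1, hca2, hcb] at hsum
      linarith
    rw [hcd i0, hall (k i0) (j i0) 0, hlam]
  · push_neg at hfull
    obtain ⟨jj, hjj⟩ := hfull
    have hempty : univ.filter (fun i => k i = k i0 ∧ j i = jj) = ∅ := by
      ext i
      simp only [Finset.mem_filter, Finset.mem_univ, true_and, Finset.notMem_empty, iff_false,
        not_and]
      intro h1 h2
      exact hjj i h1 h2
    have hd0 : d (k i0) jj = 0 := by rw [hd_def]; simp [hempty]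
    rw [hcd i0, hall (k i0) (j i0) jj, hd0]

/-- Every two-dimensional face of a polytope spanned by any subset of the nine vertices
of the free sum of three equilateral triangles (the Delone polytope of `E6*`) is a
triangle. -/
theorem stmt_11
    (t : Fin 3 → ℝ × ℝ)
    (ht : t = ![(1, 0), (-1/2, Real.sqrt 3 / 2), (-1/2, -(Real.sqrt 3 / 2))])
    (w : Fin 3 → Fin 3 → EuclideanSpace ℝ (Fin 6))
    (hw : ∀ k j i, w k j i =
      if (i : ℕ) = 2 * (k : ℕ) then (t j).1
      else if (i : ℕ) = 2 * (k : ℕ) + 1 then (t j).2 else 0)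
    (W : Set (EuclideanSpace ℝ (Fin 6)))
    (hW : W ⊆ {p | ∃ k j, p = w k j})
    (P : Set (EuclideanSpace ℝ (Fin 6)))
    (hP : P = convexHull ℝ W)
    (F : Set (EuclideanSpace ℝ (Fin 6)))
    (hFc : IsClosed F) (hFconv : Convex ℝ F)
    (hF : IsExtreme ℝ P F)
    (hdim : Module.finrank ℝ (vectorSpan ℝ F) = 2) :
    ∃ a b c : EuclideanSpace ℝ (Fin 6),
      AffineIndependent ℝ ![a, b, c] ∧ F = convexHull ℝ {a, b, c} := by
  classical
  subst hP
  have hV9fin : ({p | ∃ k j, p = w k j} : Set (EuclideanSpace ℝ (Fin 6))).Finite := by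
    apply Set.Finite.subset (Set.finite_range (fun kj : Fin 3 × Fin 3 => w kj.1 kj.2))
    rintro x ⟨k, j, rfl⟩
    exact ⟨(k, j), rfl⟩
  have hWfin : W.Finite := hV9fin.subset hW
  have hFcomp : IsCompact F :=
    (hWfin.isCompact_convexHull ℝ).of_isClosed_subset hFc hF.1
  set S := F.extremePoints ℝ with hS_def
  have hSV9 : S ⊆ {p | ∃ k j, p = w k j} := fun x hx =>
    hW (extremePoints_convexHull_subset (hF.extremePoints_subset_extremePoints hx))
  have hSfin : S.Finite := hV9fin.subset hSV9
  have hFS : F = convexHull ℝ S := by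
    conv_lhs => rw [← closure_convexHull_extremePoints hFcomp hFconv]
    exact (hSfin.isClosed_convexHull ℝ).closure_eq
  have hspanS : vectorSpan ℝ S = vectorSpan ℝ F := by
    calc vectorSpan ℝ S = (affineSpan ℝ S).direction := (direction_affineSpan ℝ S).symm
      _ = (affineSpan ℝ (convexHull ℝ S)).direction := by rw [affineSpan_convexHull]
      _ = vectorSpan ℝ (convexHull ℝ S) := direction_affineSpan ℝ _
      _ = vectorSpan ℝ F := by rw [hFS]
  have hdimS : Module.finrank ℝ (vectorSpan ℝ S) = 2 := by rw [hspanS]; exact hdim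
  -- S has at most 3 elements
  have hcard_le : hSfin.toFinset.card ≤ 3 := by
    by_contra hcard
    push_neg at hcard
    obtain ⟨T, hTsub, hT4⟩ := Finset.exists_subset_card_eq (show 4 ≤ hSfin.toFinset.card by omega)
    set p : Fin 4 → EuclideanSpace ℝ (Fin 6) :=
      fun i => (T.equivFin.symm (Fin.cast hT4.symm i) : EuclideanSpace ℝ (Fin 6)) with hp_def
    have hpmem : ∀ i, p i ∈ S := by
      intro i
      have := (T.equivFin.symm (Fin.cast hT4.symm i)).2
      exact hSfin.mem_toFinset.1 (hTsub this)
    have hpinj : Function.Injective p := by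
      intro a b hab
      have := Subtype.coe_injective hab
      have := T.equivFin.symm.injective this
      simpa [Fin.ext_iff] using congrArg Fin.val this
    have hindep : AffineIndependent ℝ p := by
      apply key4 t ht w hw p _ hpinj
      intro i
      exact hSV9 (hpmem i)
    have hfr : Module.finrank ℝ (vectorSpan ℝ (Set.range p)) = 3 :=
      hindep.finrank_vectorSpan (by simp)
    have hle : vectorSpan ℝ (Set.range p) ≤ vectorSpan ℝ S :=
      vectorSpan_mono ℝ (by rintro x ⟨i, rfl⟩; exact hpmem i)
    have := Submodule.finrank_mono hle
    omega
  -- S has at least 3 elements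
  have hcard_ge : 3 ≤ hSfin.toFinset.card := by
    by_contra hcard
    push_neg at hcard
    interval_cases h : hSfin.toFinset.card
    · have : S = ∅ := by
        have := Finset.card_eq_zero.1 h
        rw [← hSfin.coe_toFinset, this]; simp
      rw [this, vectorSpan_empty] at hdimS
      simp at hdimS
    · obtain ⟨a, ha⟩ := Finset.card_eq_one.1 h
      have : S = {a} := by rw [← hSfin.coe_toFinset, ha]; simp
      rw [this, vectorSpan_singleton] at hdimS
      simp at hdimS
    · obtain ⟨a, b, hab, hab2⟩ := Finset.card_eq_two.1 h
      have : S = {a, b} := by rw [← hSfin.coe_toFinset, hab2]; simp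
      rw [this, vectorSpan_pair] at hdimS
      by_cases hv : a -ᵥ b = 0
      · rw [hv, Submodule.span_zero_singleton] at hdimS
        simp at hdimS
      · rw [finrank_span_singleton hv] at hdimS; simp at hdimS
  have hcard : hSfin.toFinset.card = 3 := le_antisymm hcard_le hcard_ge
  obtain ⟨a, b, c, hab, hac, hbc, habc⟩ := Finset.card_eq_three.1 hcard
  have hSeq : S = {a, b, c} := by rw [← hSfin.coe_toFinset, habc]; simp
  refine ⟨a, b, c, ?_, by rw [hFS, hSeq]⟩
  rw [affineIndependent_iff_finrank_vectorSpan_eq ℝ _ (by simp : Fintype.card (Fin 3) = 2 + 1)]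
  have hrange : Set.range ![a, b, c] = {a, b, c} := by
    rw [Matrix.range_cons, Matrix.range_cons, Matrix.range_cons_empty]
    ext x
    simp only [Set.mem_union, Set.mem_singleton_iff, Set.mem_insert_iff]
  rw [hrange, ← hSeq]
  exact hdimS
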